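/- Fix A > 0 and λ ∈ (0, 1/8), and set ξ = √(1 − 8λ) ∈ (0, 1). Let C = ((1 − ξ)/(2·Γ(1 − ξ))) · (A/2)^{(1+ξ)/2} · Γ((1 − ξ)/2) · ₁F₁[−(1 + ξ)/2; 1 − ξ; 2/A], and define F(s) = (2λ A^s)/(s(s−1) + 2λ) · ₂F₂[1, −s; 3/2 + ξ/2 − s, 3/2 − ξ/2 − s; 2/A] + C · 2^s · Γ(1/2 + ξ/2 − s) · Γ(1/2 − ξ/2 − s) / Γ(−s). Then F(−1/2 + ξ/2) = ((1 − ξ)/4) · A^{(1+ξ)/2}; i.e., this choice of C makes the general solution of the fractional-moment recurrence take the value forced by the recurrence at s = −1/2 + ξ/2. -/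

import Mathlib

/-- The Pochhammer symbol (rising factorial): `(z)₀ = 1`, `(z)_{n+1} = (z)_n · (z + n)`. -/
noncomputable def poch (z : ℝ) : ℕ → ℝ
  | 0 => 1
  | n + 1 => poch z n * (z + (n : ℝ))

/-- The generalized hypergeometric series `₂F₂[a₁,a₂; b₁,b₂; z]`. -/
noncomputable def F22 (a₁ a₂ b₁ b₂ z : ℝ) : ℝ :=
  ∑' n : ℕ, poch a₁ n * poch a₂ n / (poch b₁ n * poch b₂ n) * z ^ n / (Nat.factorial n : ℝ)

/-- The confluent hypergeometric (Kummer) series `₁F₁[a; b; z]`. -/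
noncomputable def F11 (a b z : ℝ) : ℝ :=
  ∑' n : ℕ, poch a n / poch b n * z ^ n / (Nat.factorial n : ℝ)

lemma poch_succ (z : ℝ) (n : ℕ) : poch z (n + 1) = poch z n * (z + n) := rfl

lemma poch_succ_front (z : ℝ) : ∀ n : ℕ, poch z (n + 1) = z * poch (z + 1) n
  | 0 => by simp [poch]
  | n + 1 => by
    rw [poch_succ, poch_succ_front z n, poch_succ]
    push_cast
    ring

lemma poch_pos {z : ℝ} (hz : 0 < z) : ∀ n : ℕ, 0 < poch z n
  | 0 => one_pos
  | n + 1 => by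
    rw [poch_succ]
    exact mul_pos (poch_pos hz n) (by positivity)

lemma poch_one : ∀ n : ℕ, poch 1 n = (Nat.factorial n : ℝ)
  | 0 => by simp [poch]
  | n + 1 => by
    rw [poch_succ, poch_one n, Nat.factorial_succ]
    push_cast
    ring

lemma poch_two : ∀ n : ℕ, poch 2 n = (Nat.factorial (n + 1) : ℝ)
  | 0 => by simp [poch]
  | n + 1 => by
    rw [poch_succ, poch_two n, Nat.factorial_succ (n + 1)]
    push_cast
    ring

/-- Terms of the `₁F₁` series. -/
noncomputable def kterm (a b z : ℝ) (n : ℕ) : ℝ :=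
  poch a n / poch b n * z ^ n / (Nat.factorial n : ℝ)

lemma kterm_succ (a b z : ℝ) (n : ℕ) :
    kterm a b z (n + 1) = kterm a b z n * ((a + n) / (b + n) * (z / (n + 1))) := by
  unfold kterm
  rw [poch_succ, poch_succ, pow_succ, Nat.factorial_succ]
  push_cast
  simp only [div_eq_mul_inv, mul_inv]
  ring

lemma kterm_summable {a b z : ℝ} (ha : -1 < a) (ha' : a < 0) (hb : 0 < b) (hz : 0 < z) :
    Summable (kterm a b z) := by
  apply summable_of_ratio_norm_eventually_le (r := 1/2) (by norm_num)
  filter_upwards [Filter.eventually_ge_atTop (max 1 ⌈2 * z⌉₊)] with n hn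
  have hn1 : 1 ≤ n := le_trans (le_max_left _ _) hn
  have hn2 : 2 * z ≤ n := le_trans (Nat.le_ceil _) (by exact_mod_cast le_trans (le_max_right _ _) hn)
  have h1 : (0 : ℝ) ≤ a + n := by
    have : (1 : ℝ) ≤ n := by exact_mod_cast hn1
    linarith
  have h2 : (0 : ℝ) < b + n := by positivity
  have hr1 : (a + n) / (b + n) ≤ 1 := by
    rw [div_le_one h2]; linarith
  have hr2 : z / (n + 1) ≤ 1 / 2 := by
    rw [div_le_div_iff₀ (by positivity) (by norm_num)]
    linarith
  rw [kterm_succ, Real.norm_eq_abs, Real.norm_eq_abs, abs_mul]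
  have : |(a + n) / (b + n) * (z / (n + 1))| ≤ 1 / 2 := by
    rw [abs_mul, abs_of_nonneg (div_nonneg h1 h2.le), abs_of_nonneg (by positivity)]
    calc (a + n) / (b + n) * (z / (n + 1)) ≤ 1 * (1/2) :=
          mul_le_mul hr1 hr2 (by positivity) (by norm_num)
      _ = 1/2 := by ring
  calc |kterm a b z n| * |(a + n) / (b + n) * (z / (n + 1))| ≤ |kterm a b z n| * (1/2) :=
        mul_le_mul_of_nonneg_left this (abs_nonneg _)
    _ = 1/2 * |kterm a b z n| := by ring

/-- The key contiguous-function identity relating the `₂F₂` and `₁F₁` values. -/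
lemma key_identity {ξ z : ℝ} (hξ0 : 0 < ξ) (hξ1 : ξ < 1) (hz : 0 < z) :
    (1 + ξ) * z * F22 1 ((1 - ξ)/2) 2 (2 - ξ) z =
      2 * (1 - ξ) * (1 - F11 (-(1 + ξ)/2) (1 - ξ) z) := by
  set a : ℝ := -(1 + ξ)/2 with ha_def
  set b : ℝ := 1 - ξ with hb_def
  have ha : -1 < a := by rw [ha_def]; linarith
  have ha' : a < 0 := by rw [ha_def]; linarith
  have hb : 0 < b := by rw [hb_def]; linarith
  have hsum : Summable (kterm a b z) := kterm_summable ha ha' hb hz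
  have hF11 : F11 a b z = ∑' n, kterm a b z n := rfl
  have hk0 : kterm a b z 0 = 1 := by simp [kterm, poch]
  -- termwise identity
  have hterm : ∀ n : ℕ,
      (1 + ξ) * z * (poch 1 n * poch ((1 - ξ)/2) n / (poch 2 n * poch (2 - ξ) n) * z ^ n
        / (Nat.factorial n : ℝ)) = -2 * (1 - ξ) * kterm a b z (n + 1) := by
    intro n
    have hq : poch (2 - ξ) n ≠ 0 := (poch_pos (by linarith) n).ne'
    have hfac : (Nat.factorial n : ℝ) ≠ 0 := by positivity
    have hfac1 : (Nat.factorial (n + 1) : ℝ) ≠ 0 := by positivity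
    have hbne : b ≠ 0 := hb.ne'
    have e1 : a + 1 = (1 - ξ)/2 := by rw [ha_def]; ring
    have e2 : b + 1 = 2 - ξ := by rw [hb_def]; ring
    unfold kterm
    rw [poch_one, poch_two, poch_succ_front, poch_succ_front, e1, e2, pow_succ,
      Nat.factorial_succ]
    have hbne' : (1 : ℝ) - ξ ≠ 0 := by rw [hb_def] at hbne; exact hbne
    field_simp
    ring
  -- sum the termwise identity
  have hL : (1 + ξ) * z * F22 1 ((1 - ξ)/2) 2 (2 - ξ) z =
      -2 * (1 - ξ) * ∑' n, kterm a b z (n + 1) := by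
    rw [F22, ← tsum_mul_left, ← tsum_mul_left]
    exact tsum_congr hterm
  have hshift : ∑' n, kterm a b z (n + 1) = (∑' n, kterm a b z n) - 1 := by
    have := Summable.tsum_eq_zero_add hsum
    rw [hk0] at this
    linarith
  rw [hL, hshift, hF11]
  ring

/-- With `C = ((1−ξ)/(2Γ(1−ξ)))·(A/2)^{(1+ξ)/2}·Γ((1−ξ)/2)·₁F₁[−(1+ξ)/2; 1−ξ; 2/A]`, the
general solution `F` of the fractional-moment recurrence takes the value
`F(−1/2+ξ/2) = ((1−ξ)/4)·A^{(1+ξ)/2}` forced by the recurrence. -/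
theorem constant_pins_down_general_solution
    (A lam : ℝ) (hA : 0 < A) (hlam : lam ∈ Set.Ioo (0 : ℝ) (1/8))
    (ξ : ℝ) (hξ : ξ = Real.sqrt (1 - 8 * lam))
    (C : ℝ)
    (hC : C = ((1 - ξ) / (2 * Real.Gamma (1 - ξ))) * (A / 2) ^ ((1 + ξ) / 2) *
      Real.Gamma ((1 - ξ) / 2) * F11 (-(1 + ξ) / 2) (1 - ξ) (2 / A))
    (F : ℝ → ℝ)
    (hF : ∀ s : ℝ, F s =
      (2 * lam * A ^ s) / (s * (s - 1) + 2 * lam) *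
          F22 1 (-s) (3/2 + ξ/2 - s) (3/2 - ξ/2 - s) (2 / A) +
        C * 2 ^ s * Real.Gamma (1/2 + ξ/2 - s) * Real.Gamma (1/2 - ξ/2 - s) /
          Real.Gamma (-s)) :
    F (-1/2 + ξ/2) = ((1 - ξ) / 4) * A ^ ((1 + ξ) / 2) := by
  obtain ⟨hl0, hl8⟩ := hlam
  have h18 : (0 : ℝ) < 1 - 8 * lam := by linarith
  have hξ0 : 0 < ξ := by rw [hξ]; exact Real.sqrt_pos.mpr h18
  have hξ1 : ξ < 1 := by
    rw [hξ]
    calc Real.sqrt (1 - 8 * lam) < Real.sqrt 1 := by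
          apply Real.sqrt_lt_sqrt (by linarith) (by linarith)
      _ = 1 := Real.sqrt_one
  have hξsq : ξ ^ 2 = 1 - 8 * lam := by
    rw [hξ, sq, Real.mul_self_sqrt h18.le]
  have hz : (0 : ℝ) < 2 / A := by positivity
  rw [hF]
  -- simplify the arguments
  have e1 : (1/2 + ξ/2 - (-1/2 + ξ/2) : ℝ) = 1 := by ring
  have e2 : (3/2 + ξ/2 - (-1/2 + ξ/2) : ℝ) = 2 := by ring
  have e3 : (3/2 - ξ/2 - (-1/2 + ξ/2) : ℝ) = 2 - ξ := by ring
  have e4 : (1/2 - ξ/2 - (-1/2 + ξ/2) : ℝ) = 1 - ξ := by ring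
  have e5 : (-(-1/2 + ξ/2) : ℝ) = (1 - ξ)/2 := by ring
  have e6 : ((-1/2 + ξ/2) * ((-1/2 + ξ/2) - 1) + 2 * lam : ℝ) = 1 - ξ := by nlinarith [hξsq]
  rw [e1, e2, e3, e4, e5, e6, Real.Gamma_one, hC]
  have hG1 : Real.Gamma (1 - ξ) ≠ 0 := (Real.Gamma_pos_of_pos (by linarith)).ne'
  have hG2 : Real.Gamma ((1 - ξ)/2) ≠ 0 := (Real.Gamma_pos_of_pos (by linarith)).ne'
  have hr1 : A ^ (-1/2 + ξ/2 : ℝ) * A = A ^ ((1 + ξ)/2 : ℝ) := by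
    rw [show ((1 + ξ)/2 : ℝ) = (-1/2 + ξ/2) + 1 by ring, Real.rpow_add_one hA.ne']
  have hr2 : (A/2) ^ ((1 + ξ)/2 : ℝ) * (2 : ℝ) ^ (-1/2 + ξ/2 : ℝ) * 2 = A ^ ((1 + ξ)/2 : ℝ) := by
    have h2q : (2:ℝ) ^ (-1/2 + ξ/2 : ℝ) * 2 = (2:ℝ) ^ ((1 + ξ)/2 : ℝ) := by
      rw [show ((1 + ξ)/2 : ℝ) = (-1/2 + ξ/2) + 1 by ring,
        Real.rpow_add_one (two_ne_zero) (-1/2 + ξ/2 : ℝ)]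
    rw [Real.div_rpow hA.le (by norm_num : (0:ℝ) ≤ 2), mul_assoc, h2q,
      div_mul_cancel₀ _ (Real.rpow_pos_of_pos (by norm_num) _).ne']
  have hkey := key_identity hξ0 hξ1 hz
  have h2lam : 2 * lam = (1 - ξ) * (1 + ξ) / 4 := by nlinarith [hξsq]
  have hone : (1 : ℝ) - ξ ≠ 0 := by linarith
  generalize hTg : F22 1 ((1 - ξ) / 2) 2 (2 - ξ) (2 / A) = T at *
  generalize hGg : F11 (-(1 + ξ) / 2) (1 - ξ) (2 / A) = G at *
  generalize hP1g : A ^ (-1/2 + ξ/2 : ℝ) = P1 at *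
  generalize hPg : A ^ ((1 + ξ)/2 : ℝ) = P at *
  generalize hQg : (2 : ℝ) ^ (-1/2 + ξ/2 : ℝ) = Q at *
  generalize hP2g : (A/2) ^ ((1 + ξ)/2 : ℝ) = P2 at *
  have hkey2 : (1 + ξ) * T * 2 = 2 * (1 - ξ) * (1 - G) * A := by
    field_simp at hkey
    linear_combination 2 * hkey
  have hterm1 : 2 * lam * P1 / (1 - ξ) * T = (1 - ξ)/4 * (1 - G) * P := by
    rw [h2lam, ← hr1]
    field_simp
    linear_combination P1 / 2 * hkey2
  have hterm2 : (1 - ξ) / (2 * Real.Gamma (1 - ξ)) * P2 * Real.Gamma ((1 - ξ)/2) * G * Q * 1 *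
      Real.Gamma (1 - ξ) / Real.Gamma ((1 - ξ)/2) = (1 - ξ)/4 * G * P := by
    rw [← hr2]
    field_simp
    ring
  linear_combination hterm1 + hterm2
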